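/- Let n = 2k with k ≥ 1. Let P be a polynomial function with real coefficients in the entries c_{ij} (1 ≤ i ≤ j ≤ n) of a symmetric n×n matrix c and the entries a_{ij} (1 ≤ i,j ≤ n) of an n×n matrix a. Suppose that P is invariant under the coadjoint action on the positive definite locus, i.e. P(Ad*(x,g)(c,a)) = P(c,a) for every symmetric n×n real matrix x, every g ∈ GL(n,ℝ) with det g > 0, every positive definite symmetric n×n real matrix c and every n×n real matrix a. Then P is constant. -/

import Mathlib

open Matrix

/-- Variable index type: one variable c_{ij} for each pair i ≤ j (entries of a
    symmetric matrix) and one variable a_{ij} for each pair (i,j). -/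
abbrev OrbitVar (n : ℕ) := {p : Fin n × Fin n // p.1 ≤ p.2} ⊕ (Fin n × Fin n)

/-- Evaluation of the variables at a concrete pair of matrices (c, a). -/
def orbitEval {n : ℕ} (c a : Matrix (Fin n) (Fin n) ℝ) : OrbitVar n → ℝ :=
  Sum.elim (fun p => c p.1.1 p.1.2) (fun p => a p.1 p.2)

/-- The evaluation of `P` along an affine line `c + t • d` in the `c`-slot is a
polynomial function of `t`. -/
lemma orbit_poly {n : ℕ} (P : MvPolynomial (OrbitVar n) ℝ)
    (c d a : Matrix (Fin n) (Fin n) ℝ) :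
    ∃ q : Polynomial ℝ, ∀ t : ℝ,
      q.eval t = MvPolynomial.eval (orbitEval (c + t • d) a) P := by
  classical
  set f : OrbitVar n → Polynomial ℝ :=
    Sum.elim
      (fun p => Polynomial.C (c p.1.1 p.1.2) + Polynomial.C (d p.1.1 p.1.2) * Polynomial.X)
      (fun p => Polynomial.C (a p.1 p.2)) with hf
  refine ⟨MvPolynomial.eval₂ Polynomial.C f P, fun t => ?_⟩
  have h := MvPolynomial.eval₂_comp_left (Polynomial.evalRingHom t) Polynomial.C f P
  simp only [Polynomial.coe_evalRingHom] at h
  rw [h]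
  have h1 : (Polynomial.evalRingHom t).comp Polynomial.C = RingHom.id ℝ := by
    ext r; simp
  have h2 : (Polynomial.eval t ∘ f) = orbitEval (c + t • d) a := by
    funext w
    cases w with
    | inl p =>
      simp only [hf, Function.comp_apply, Sum.elim_inl, Polynomial.eval_add,
        Polynomial.eval_mul, Polynomial.eval_C, Polynomial.eval_X, orbitEval,
        Matrix.add_apply, Matrix.smul_apply, smul_eq_mul]
      ring
    | inr p =>
      simp only [hf, Function.comp_apply, Sum.elim_inr, Polynomial.eval_C, orbitEval]
  rw [h1, h2]
  rfl

/-- A real polynomial constant on a half-line is constant. -/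
lemma eval_const_of_eventually {q : Polynomial ℝ} {r M : ℝ}
    (h : ∀ t, M < t → q.eval t = r) (t : ℝ) : q.eval t = r := by
  have hq : q = Polynomial.C r := by
    apply Polynomial.eq_of_infinite_eval_eq
    apply (Set.Ioi_infinite M).mono
    intro x hx
    simp only [Set.mem_setOf_eq, Polynomial.eval_C]
    exact h x hx
  simp [hq]

/-- Adding a large positive multiple of the identity to a symmetric real matrix
gives a positive definite matrix. -/
lemma posdef_large {n : ℕ} (c : Matrix (Fin n) (Fin n) ℝ) (hc : c.IsSymm) :
    ∃ M : ℝ, ∀ t, M < t → (c + t • 1).PosDef := by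
  classical
  refine ⟨∑ i, ∑ j, |c i j|, fun t ht => ?_⟩
  have hM0 : (0:ℝ) ≤ ∑ i, ∑ j, |c i j| :=
    Finset.sum_nonneg fun i _ => Finset.sum_nonneg fun j _ => abs_nonneg _
  rw [Matrix.posDef_iff_dotProduct_mulVec]
  constructor
  · rw [Matrix.IsHermitian, Matrix.conjTranspose_eq_transpose_of_trivial]
    exact hc.add (by rw [Matrix.IsSymm, Matrix.transpose_smul, Matrix.transpose_one])
  · intro y hy
    have hS : 0 < y ⬝ᵥ y := by
      have := (dotProduct_star_self_pos_iff (v := y)).2 hy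
      simpa using this
    have hsq : ∀ i, y i * y i ≤ y ⬝ᵥ y := by
      intro i
      exact Finset.single_le_sum (f := fun k => y k * y k)
        (fun k _ => mul_self_nonneg _) (Finset.mem_univ i)
    have hyy : ∀ i j, |y i * y j| ≤ y ⬝ᵥ y := by
      intro i j
      have hi := hsq i
      have hj := hsq j
      rw [abs_mul]
      nlinarith [sq_nonneg (|y i| - |y j|), sq_abs (y i), sq_abs (y j),
        abs_nonneg (y i), abs_nonneg (y j)]
    have hbound : |y ⬝ᵥ (c *ᵥ y)| ≤ (∑ i, ∑ j, |c i j|) * (y ⬝ᵥ y) := by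
      have h1 : y ⬝ᵥ (c *ᵥ y) = ∑ i, ∑ j, y i * (c i j * y j) := by
        simp [dotProduct, Matrix.mulVec, Finset.mul_sum]
      rw [h1]
      calc |∑ i, ∑ j, y i * (c i j * y j)|
          ≤ ∑ i, |∑ j, y i * (c i j * y j)| := Finset.abs_sum_le_sum_abs _ _
        _ ≤ ∑ i, ∑ j, |y i * (c i j * y j)| :=
            Finset.sum_le_sum fun i _ => Finset.abs_sum_le_sum_abs _ _
        _ ≤ ∑ i, ∑ j, |c i j| * (y ⬝ᵥ y) := by
            refine Finset.sum_le_sum fun i _ => Finset.sum_le_sum fun j _ => ?_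
            have heq : |y i * (c i j * y j)| = |c i j| * |y i * y j| := by
              rw [show y i * (c i j * y j) = c i j * (y i * y j) by ring, abs_mul]
            rw [heq]
            exact mul_le_mul_of_nonneg_left (hyy i j) (abs_nonneg _)
        _ = (∑ i, ∑ j, |c i j|) * (y ⬝ᵥ y) := by
            rw [Finset.sum_mul]
            exact Finset.sum_congr rfl fun i _ => (Finset.sum_mul _ _ _).symm
    have key : -((∑ i, ∑ j, |c i j|) * (y ⬝ᵥ y)) ≤ y ⬝ᵥ (c *ᵥ y) :=
      neg_le_of_abs_le hbound
    have hrw : star y ⬝ᵥ ((c + t • 1) *ᵥ y) = y ⬝ᵥ (c *ᵥ y) + t * (y ⬝ᵥ y) := by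
      rw [Matrix.add_mulVec, dotProduct_add, Matrix.smul_mulVec,
        Matrix.one_mulVec, dotProduct_smul]
      simp [star_trivial]
    rw [hrw]
    nlinarith

theorem invariant_polynomials_are_constant (k : ℕ) (hk : 1 ≤ k)
    (P : MvPolynomial (OrbitVar (2 * k)) ℝ)
    (hP : ∀ x g c a : Matrix (Fin (2 * k)) (Fin (2 * k)) ℝ,
      x.IsSymm → 0 < g.det → c.PosDef →
      MvPolynomial.eval
        (orbitEval ((gᵀ)⁻¹ * c * g⁻¹) (g * a * g⁻¹ + x * ((gᵀ)⁻¹ * c * g⁻¹))) P =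
        MvPolynomial.eval (orbitEval c a) P) :
    ∃ r : ℝ, P = MvPolynomial.C r := by
  classical
  set G : Matrix (Fin (2 * k)) (Fin (2 * k)) ℝ → ℝ :=
    fun a => MvPolynomial.eval (orbitEval 0 a) P with hG
  -- Step 0: rescaling of c (with the scalar group element) : for t > 0,
  -- P(t • c, a) = P(c, a).
  have scale : ∀ (c a : Matrix (Fin (2 * k)) (Fin (2 * k)) ℝ), c.PosDef → ∀ t : ℝ, 0 < t →
      MvPolynomial.eval (orbitEval (t • c) a) P = MvPolynomial.eval (orbitEval c a) P := by
    intro c a hc t ht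
    obtain ⟨s, hs0, hss⟩ : ∃ s : ℝ, 0 < s ∧ s * s = t :=
      ⟨Real.sqrt t, Real.sqrt_pos.2 ht, Real.mul_self_sqrt ht.le⟩
    set g : Matrix (Fin (2 * k)) (Fin (2 * k)) ℝ := Matrix.diagonal (fun _ => s⁻¹) with hg
    have hdet : 0 < g.det := by
      rw [hg, Matrix.det_diagonal, Finset.prod_const]
      exact pow_pos (inv_pos.2 hs0) _
    have hginv : g⁻¹ = Matrix.diagonal (fun _ => s) := by
      apply Matrix.inv_eq_right_inv
      rw [hg, Matrix.diagonal_mul_diagonal]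
      rw [show (fun _ : Fin (2 * k) => s⁻¹ * s) = fun _ => (1:ℝ) from
        funext fun _ => inv_mul_cancel₀ hs0.ne', Matrix.diagonal_one]
    have hgt : gᵀ = g := by rw [hg, Matrix.diagonal_transpose]
    have hdiag : ∀ r : ℝ, Matrix.diagonal (fun _ : Fin (2 * k) => r)
        = r • (1 : Matrix (Fin (2 * k)) (Fin (2 * k)) ℝ) :=
      fun r => (Matrix.smul_one_eq_diagonal r).symm
    have hcc : (gᵀ)⁻¹ * c * g⁻¹ = t • c := by
      rw [hgt, hginv, hdiag, Matrix.smul_mul, Matrix.one_mul, Matrix.smul_mul,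
        Matrix.mul_smul, Matrix.mul_one, smul_smul, hss]
    have haa : g * a * g⁻¹ = a := by
      rw [hg, hginv, hdiag, hdiag, Matrix.smul_mul, Matrix.one_mul, Matrix.smul_mul,
        Matrix.mul_smul, Matrix.mul_one, smul_smul, inv_mul_cancel₀ hs0.ne', one_smul]
    have h := hP 0 g c a Matrix.isSymm_zero hdet hc
    rw [hcc, haa] at h
    simpa using h
  -- Step 1: on the positive definite locus, P does not depend on c.
  have step1 : ∀ (c a : Matrix (Fin (2 * k)) (Fin (2 * k)) ℝ), c.PosDef →
      MvPolynomial.eval (orbitEval c a) P = G a := by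
    intro c a hc
    obtain ⟨q, hq⟩ := orbit_poly P 0 c a
    have hconst : ∀ t, (0:ℝ) < t →
        q.eval t = MvPolynomial.eval (orbitEval c a) P := by
      intro t ht
      rw [hq, zero_add]
      exact scale c a hc t ht
    have h0 := eval_const_of_eventually hconst 0
    rw [hq] at h0
    simpa [hG] using h0.symm
  -- Step 2: shift invariance.
  have step2 : ∀ (a x c : Matrix (Fin (2 * k)) (Fin (2 * k)) ℝ), x.IsSymm → c.PosDef →
      G (a + x * c) = G a := by
    intro a x c hx hc
    have h := hP x 1 c a hx (by simp) hc
    simp only [Matrix.transpose_one, inv_one, Matrix.one_mul, Matrix.mul_one] at h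
    rw [step1 c _ hc, step1 c a hc] at h
    exact h
  -- Step 3: full translation invariance of G.
  have step3 : ∀ a m : Matrix (Fin (2 * k)) (Fin (2 * k)) ℝ, G (a + m) = G a := by
    intro a m
    set K : Matrix (Fin (2 * k)) (Fin (2 * k)) ℝ := (1/2 : ℝ) • (m - mᵀ) with hK
    set d : Fin (2 * k) → ℝ := fun i => (i : ℕ) + 1 with hd
    set x : Matrix (Fin (2 * k)) (Fin (2 * k)) ℝ :=
      Matrix.of fun i j => 2 * K i j / (d j - d i) with hx
    set p : Matrix (Fin (2 * k)) (Fin (2 * k)) ℝ := Matrix.diagonal d with hp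
    have hKskew : ∀ i j, K j i = -K i j := by
      intro i j
      simp only [hK, Matrix.smul_apply, Matrix.sub_apply, Matrix.transpose_apply,
        smul_eq_mul]
      ring
    have hdne : ∀ i j : Fin (2 * k), i ≠ j → d j - d i ≠ 0 := by
      intro i j hij
      rw [sub_ne_zero]
      intro h
      apply hij
      have h' : ((i : ℕ) : ℝ) = ((j : ℕ) : ℝ) := by
        have := h.symm
        simp only [hd] at this
        linarith
      exact Fin.ext (Nat.cast_injective h')
    have hxsymm : x.IsSymm := by
      rw [Matrix.IsSymm]
      ext i j
      rw [Matrix.transpose_apply]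
      show 2 * K j i / (d i - d j) = 2 * K i j / (d j - d i)
      rw [hKskew i j, show d i - d j = -(d j - d i) by ring,
        show 2 * -K i j = -(2 * K i j) by ring, neg_div_neg_eq]
    have hxji : ∀ i j, x j i = x i j := by
      intro i j
      have h' := congrFun (congrFun hxsymm j) i
      rw [Matrix.transpose_apply] at h'
      exact h'.symm
    have hxp : ∀ i j, (x * p) i j = x i j * d j := by
      intro i j
      rw [hp, Matrix.mul_diagonal]
    have hzsymm : (m - x * p).IsSymm := by
      rw [Matrix.IsSymm]
      ext i j
      rw [Matrix.transpose_apply, Matrix.sub_apply, Matrix.sub_apply, hxp j i, hxp i j]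
      by_cases hij : i = j
      · subst hij; rfl
      · have hne := hdne i j hij
        have hKval : x i j * (d j - d i) = 2 * K i j := by
          show 2 * K i j / (d j - d i) * (d j - d i) = 2 * K i j
          exact div_mul_cancel₀ _ hne
        have hKm : 2 * K i j = m i j - m j i := by
          simp only [hK, Matrix.smul_apply, Matrix.sub_apply, Matrix.transpose_apply,
            smul_eq_mul]
          ring
        rw [mul_sub] at hKval
        rw [hxji i j]
        linarith
    have hpPos : p.PosDef := by
      rw [hp]
      exact Matrix.PosDef.diagonal (fun i => by positivity)
    have h1 : G (a + (m - x * p) + x * p) = G (a + (m - x * p)) :=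
      step2 (a + (m - x * p)) x p hxsymm hpPos
    have h2 : G (a + (m - x * p)) = G a := by
      have h := step2 a (m - x * p) 1 hzsymm Matrix.PosDef.one
      rwa [Matrix.mul_one] at h
    calc G (a + m) = G (a + (m - x * p) + x * p) := by
          rw [add_assoc, sub_add_cancel]
      _ = G a := h1.trans h2
  -- Step 4: G is constant.
  have step4 : ∀ a : Matrix (Fin (2 * k)) (Fin (2 * k)) ℝ, G a = G 0 := by
    intro a
    have h := step3 0 a
    simpa using h
  -- Step 5: conclude that P is the constant polynomial.
  refine ⟨G 0, ?_⟩
  apply MvPolynomial.funext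
  intro v
  rw [MvPolynomial.eval_C]
  set c : Matrix (Fin (2 * k)) (Fin (2 * k)) ℝ :=
    Matrix.of fun i j =>
      if h : i ≤ j then v (Sum.inl ⟨(i, j), h⟩) else v (Sum.inl ⟨(j, i), le_of_not_ge h⟩)
    with hc
  set a : Matrix (Fin (2 * k)) (Fin (2 * k)) ℝ := Matrix.of fun i j => v (Sum.inr (i, j))
    with ha
  have hv : orbitEval c a = v := by
    funext w
    cases w with
    | inl q =>
      obtain ⟨⟨i, j⟩, hij⟩ := q
      simp [orbitEval, hc, hij]
    | inr q => simp [orbitEval, ha]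
  have hcsymm : c.IsSymm := by
    rw [Matrix.IsSymm]
    ext i j
    rw [Matrix.transpose_apply]
    by_cases h1 : i ≤ j <;> by_cases h2 : j ≤ i
    · have hij : i = j := le_antisymm h1 h2
      subst hij
      rfl
    · show c j i = c i j
      rw [hc]
      simp [h1, h2]
    · show c j i = c i j
      rw [hc]
      simp [h1, h2]
    · exact absurd (le_total i j) (by simp [h1, h2])
  rw [← hv]
  obtain ⟨q, hq⟩ := orbit_poly P c 1 a
  obtain ⟨M, hM⟩ := posdef_large c hcsymm
  have hconst : ∀ t, M < t → q.eval t = G 0 := by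
    intro t ht
    rw [hq, step1 _ _ (hM t ht), step4]
  have h0 := eval_const_of_eventually hconst 0
  rw [hq] at h0
  simpa [hG] using h0
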